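/- arXiv:2509.11538 — 3 statements merged into one kernel-verified Lean document; each statement's English description precedes it below -/
import Mathlib

section
/- Let n ≥ 1 and let M be an n×n real matrix with nonnegative entries that is irreducible. If p is a row vector with all entries strictly positive and μ is a real number such that p·M = μ·p, then μ = ρ(M). Moreover, if q is another row vector with all entries strictly positive satisfying q·M = ρ(M)·q, then q = c·p for some real scalar c > 0. -/
open Matrix

/-- Spectral radius of a real square matrix: the supremum (here: maximum) of the
absolute values of its complex eigenvalues. -/
noncomputable def specRad {n : ℕ} (M : Matrix (Fin n) (Fin n) ℝ) : ℝ :=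
  sSup ((fun z : ℂ => ‖z‖) '' spectrum ℂ (M.map (Complex.ofReal ·)))

/-- A nonnegative matrix is irreducible if for every pair of indices `(i, j)`
there is a positive power `k` with `(M ^ k) i j > 0`. -/
def MatIrreducible {n : ℕ} (M : Matrix (Fin n) (Fin n) ℝ) : Prop :=
  ∀ i j : Fin n, ∃ k : ℕ, 0 < k ∧ 0 < (M ^ k) i j

lemma specAux {n : ℕ} (A : Matrix (Fin n) (Fin n) ℂ) (z : ℂ) :
    z ∈ spectrum ℂ A ↔ (z • (1 : Matrix (Fin n) (Fin n) ℂ) - A).det = 0 := by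
  rw [spectrum.mem_iff, Algebra.algebraMap_eq_smul_one, Matrix.isUnit_iff_isUnit_det,
    isUnit_iff_ne_zero, not_ne_iff]

lemma specAux2 {n : ℕ} (A : Matrix (Fin n) (Fin n) ℂ) (z : ℂ) :
    z ∈ spectrum ℂ A ↔ ∃ v ≠ 0, A *ᵥ v = z • v := by
  rw [specAux, ← Matrix.exists_mulVec_eq_zero_iff]
  constructor
  · rintro ⟨v, hv, h⟩
    refine ⟨v, hv, ?_⟩
    rw [Matrix.sub_mulVec, Matrix.smul_mulVec, Matrix.one_mulVec, sub_eq_zero] at h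
    exact h.symm
  · rintro ⟨v, hv, h⟩
    exact ⟨v, hv, by rw [Matrix.sub_mulVec, Matrix.smul_mulVec, Matrix.one_mulVec, h,
      sub_self]⟩

lemma pow_entry_nonneg {n : ℕ} {M : Matrix (Fin n) (Fin n) ℝ} (hM : ∀ i j, 0 ≤ M i j)
    (k : ℕ) (i j : Fin n) : 0 ≤ (M ^ k) i j := by
  induction k generalizing i j with
  | zero => simp [Matrix.one_apply]; positivity
  | succ m ih =>
      rw [pow_succ, Matrix.mul_apply]
      exact Finset.sum_nonneg fun l _ => mul_nonneg (ih i l) (hM l j)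

lemma vecMul_pow {n : ℕ} {M : Matrix (Fin n) (Fin n) ℝ} {r : Fin n → ℝ} {μ : ℝ}
    (h : r ᵥ* M = μ • r) (k : ℕ) : r ᵥ* M ^ k = μ ^ k • r := by
  induction k with
  | zero => simp
  | succ m ih =>
      rw [pow_succ, ← Matrix.vecMul_vecMul, ih, Matrix.smul_vecMul, h, smul_smul, pow_succ]


/-- for an irreducible nonnegative matrix, any strictly positive
left eigenvector has eigenvalue `specRad M`, and the positive left eigenvector is
unique up to a positive scalar. -/
theorem stmt_1 {n : ℕ} (hn : 1 ≤ n) (M : Matrix (Fin n) (Fin n) ℝ)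
    (hM : ∀ i j, 0 ≤ M i j) (hirr : MatIrreducible M)
    (p : Fin n → ℝ) (hp : ∀ i, 0 < p i) (μ : ℝ) (hpM : p ᵥ* M = μ • p) :
    μ = specRad M ∧
      ∀ q : Fin n → ℝ, (∀ i, 0 < q i) → q ᵥ* M = specRad M • q →
        ∃ c : ℝ, 0 < c ∧ q = c • p := by
  haveI : NeZero n := ⟨Nat.one_le_iff_ne_zero.mp hn⟩
  set i₀ : Fin n := ⟨0, hn⟩
  set M' : Matrix (Fin n) (Fin n) ℂ := M.map (Complex.ofReal ·) with hM'
  -- μ ≥ 0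
  have hμ0 : 0 ≤ μ := by
    have h1 : (p ᵥ* M) i₀ = μ * p i₀ := by rw [hpM]; rfl
    have h2 : 0 ≤ (p ᵥ* M) i₀ := by
      rw [Matrix.vecMul, dotProduct]
      exact Finset.sum_nonneg fun j _ => mul_nonneg (hp j).le (hM j i₀)
    nlinarith [hp i₀]
  -- μ is in the spectrum
  have hmem : (μ : ℂ) ∈ spectrum ℂ M' := by
    rw [specAux, ← Matrix.det_transpose, Matrix.transpose_sub, Matrix.transpose_smul,
      Matrix.transpose_one]
    rw [← Matrix.exists_mulVec_eq_zero_iff]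
    refine ⟨fun i => (p i : ℂ), ?_, ?_⟩
    · intro h
      have := congrFun h i₀
      simp only [Pi.zero_apply, Complex.ofReal_eq_zero] at this
      exact (hp i₀).ne' this
    · funext i
      have hpMi : (p ᵥ* M) i = μ * p i := by rw [hpM]; rfl
      simp only [Matrix.sub_mulVec, Matrix.smul_mulVec, Matrix.one_mulVec,
        Matrix.mulVec_transpose, Pi.sub_apply, Pi.smul_apply, Pi.zero_apply, smul_eq_mul]
      rw [sub_eq_zero]
      rw [Matrix.vecMul, dotProduct] at hpMi
      rw [Matrix.vecMul, dotProduct]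
      have : (∑ j, (p j : ℂ) * M' j i) = ((∑ j, p j * M j i : ℝ) : ℂ) := by
        push_cast; exact Finset.sum_congr rfl fun j _ => by simp [hM', Matrix.map_apply]
      rw [this, hpMi]; push_cast; ring
  -- every spectral value has absolute value ≤ μ
  have hbound : ∀ z ∈ spectrum ℂ M', ‖z‖ ≤ μ := by
    intro z hz
    obtain ⟨v, hv, hvz⟩ := (specAux2 M' z).mp hz
    set w : Fin n → ℝ := fun i => ‖v i‖ with hw
    have hwle : ∀ i, ‖z‖ * w i ≤ (M *ᵥ w) i := by
      intro i
      have : z * v i = (M' *ᵥ v) i := by rw [hvz]; rfl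
      calc ‖z‖ * w i = ‖z * v i‖ := by rw [norm_mul]
        _ = ‖∑ j, M' i j * v j‖ := by rw [this, Matrix.mulVec, dotProduct]
        _ ≤ ∑ j, ‖M' i j * v j‖ := by
              exact norm_sum_le _ _
        _ = (M *ᵥ w) i := by
              rw [Matrix.mulVec, dotProduct]
              refine Finset.sum_congr rfl fun j _ => ?_
              rw [norm_mul]
              simp [hM', hw, Matrix.map_apply, Complex.norm_real, abs_of_nonneg (hM i j)]
    have hpw : 0 < p ⬝ᵥ w := by
      obtain ⟨i, hi⟩ := Function.ne_iff.mp hv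
      refine Finset.sum_pos' (fun j _ => mul_nonneg (hp j).le (norm_nonneg _)) ⟨i,
        Finset.mem_univ i, mul_pos (hp i) ?_⟩
      simpa [hw] using (norm_pos_iff.mpr (by simpa using hi))
    have key : ‖z‖ * (p ⬝ᵥ w) ≤ μ * (p ⬝ᵥ w) := by
      have h1 : p ⬝ᵥ (M *ᵥ w) = μ * (p ⬝ᵥ w) := by
        rw [Matrix.dotProduct_mulVec, hpM, smul_dotProduct, smul_eq_mul]
      calc ‖z‖ * (p ⬝ᵥ w) = ∑ i, p i * (‖z‖ * w i) := by
            rw [dotProduct, Finset.mul_sum]; exact Finset.sum_congr rfl fun i _ => by ring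
        _ ≤ ∑ i, p i * (M *ᵥ w) i :=
            Finset.sum_le_sum fun i _ => mul_le_mul_of_nonneg_left (hwle i) (hp i).le
        _ = μ * (p ⬝ᵥ w) := h1
    exact le_of_mul_le_mul_right key hpw
  -- conclude μ = specRad M
  have hμS : μ ∈ (fun z : ℂ => ‖z‖) '' spectrum ℂ M' := ⟨(μ : ℂ), hmem, by
    simp [Complex.norm_real, abs_of_nonneg hμ0]⟩
  have hspec : μ = specRad M := by
    rw [specRad]
    refine le_antisymm (le_csSup ⟨μ, ?_⟩ hμS) (csSup_le ⟨μ, hμS⟩ ?_)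
    · rintro x ⟨z, hz, rfl⟩; exact hbound z hz
    · rintro x ⟨z, hz, rfl⟩; exact hbound z hz
  refine ⟨hspec, ?_⟩
  -- uniqueness
  intro q hq hqM
  rw [← hspec] at hqM
  obtain ⟨i₁, -, hi₁⟩ := Finset.exists_min_image Finset.univ (fun i => q i / p i)
    Finset.univ_nonempty
  set c : ℝ := q i₁ / p i₁ with hc
  have hcpos : 0 < c := div_pos (hq i₁) (hp i₁)
  set r : Fin n → ℝ := q - c • p with hr
  have hr0 : ∀ i, 0 ≤ r i := by
    intro i
    have : c ≤ q i / p i := hi₁ i (Finset.mem_univ i)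
    have := (le_div_iff₀ (hp i)).mp this
    simp [hr]; linarith
  have hri₁ : r i₁ = 0 := by
    simp [hr, hc, div_mul_cancel₀ _ (hp i₁).ne']
  have hrM : r ᵥ* M = μ • r := by
    rw [hr, Matrix.sub_vecMul, Matrix.smul_vecMul, hpM, hqM, smul_sub, smul_comm]
  have hrzero : ∀ i, r i = 0 := by
    intro j
    by_contra hj
    have hrj : 0 < r j := lt_of_le_of_ne (hr0 j) (Ne.symm hj)
    obtain ⟨k, hk, hMk⟩ := hirr j i₁
    have h1 : (r ᵥ* M ^ k) i₁ = μ ^ k * r i₁ := by rw [vecMul_pow hrM]; rfl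
    have h2 : 0 < (r ᵥ* M ^ k) i₁ := by
      rw [Matrix.vecMul, dotProduct]
      refine Finset.sum_pos' (fun l _ => mul_nonneg (hr0 l) (pow_entry_nonneg hM k l i₁))
        ⟨j, Finset.mem_univ j, mul_pos hrj hMk⟩
    rw [h1, hri₁, mul_zero] at h2
    exact lt_irrefl 0 h2
  refine ⟨c, hcpos, ?_⟩
  funext i
  have := hrzero i
  simp only [hr, Pi.sub_apply, Pi.smul_apply, smul_eq_mul, sub_eq_zero] at this
  simpa using this
end

section
/- Let n ≥ 1 and let M be an n×n real matrix with nonnegative entries that is irreducible. Suppose p is a row vector with all entries strictly positive and r is a real number with r > -1 such that p = (1+r)·(p·M) (the dynamic production-price equation with uniform profit rate r). Then ρ(M) > 0 and r = 1/ρ(M) - 1. In particular the uniform profit rate r is a strictly decreasing function of the spectral radius ρ(M). -/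
open Matrix

lemma mem_spectrum_iff_det {n : ℕ} {K : Type*} [Field K]
    (A : Matrix (Fin n) (Fin n) K) (μ : K) :
    μ ∈ spectrum K A ↔ (μ • (1 : Matrix (Fin n) (Fin n) K) - A).det = 0 := by
  rw [spectrum.mem_iff, Algebra.algebraMap_eq_smul_one]
  rw [Matrix.isUnit_iff_isUnit_det, isUnit_iff_ne_zero, not_ne_iff]

/-- if a strictly positive price vector `p` satisfies the
dynamic production-price equation `p = (1 + r) • (p ᵥ* M)` with `r > -1`, then
`specRad M > 0` and `r = 1 / specRad M - 1`; in particular the uniform profit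
rate is a strictly decreasing function of the spectral radius. -/
theorem stmt_2 {n : ℕ} (hn : 1 ≤ n) (M : Matrix (Fin n) (Fin n) ℝ)
    (hM : ∀ i j, 0 ≤ M i j) (hirr : MatIrreducible M)
    (p : Fin n → ℝ) (hp : ∀ i, 0 < p i) (r : ℝ) (hr : -1 < r)
    (heq : p = (1 + r) • (p ᵥ* M)) :
    0 < specRad M ∧ r = 1 / specRad M - 1 ∧
      StrictAntiOn (fun x : ℝ => 1 / x - 1) (Set.Ioi 0) := by
  have ht : (0 : ℝ) < 1 + r := by linarith
  set lam : ℝ := (1 + r)⁻¹ with hlam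
  have hlam_pos : 0 < lam := inv_pos.mpr ht
  -- p is a left eigenvector with eigenvalue lam
  have hpe : p ᵥ* M = lam • p := by
    calc p ᵥ* M = lam • ((1 + r) • (p ᵥ* M)) := by
          rw [smul_smul, inv_mul_cancel₀ ht.ne', one_smul]
      _ = lam • p := by rw [← heq]
  -- lam is in the complex spectrum of the complexified matrix
  have hlam_mem : (lam : ℂ) ∈ spectrum ℂ (M.map (Complex.ofReal ·)) := by
    rw [mem_spectrum_iff_det]
    have hdetR : (lam • (1 : Matrix (Fin n) (Fin n) ℝ) - M).det = 0 := by
      rw [← Matrix.det_transpose]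
      rw [← Matrix.exists_mulVec_eq_zero_iff]
      refine ⟨p, fun h0 => (hp ⟨0, hn⟩).ne' (congrFun h0 ⟨0, hn⟩), ?_⟩
      have : (lam • (1 : Matrix (Fin n) (Fin n) ℝ) - M)ᵀ = lam • 1 - Mᵀ := by
        simp [Matrix.transpose_smul]
      rw [this]
      ext j
      have := congrFun hpe j
      simp [Matrix.sub_mulVec, Matrix.smul_mulVec, Matrix.mulVec_transpose, this,
        Matrix.one_mulVec]
    have hmap : ((lam : ℂ) • (1 : Matrix (Fin n) (Fin n) ℂ) - M.map (Complex.ofReal ·))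
        = (lam • (1 : Matrix (Fin n) (Fin n) ℝ) - M).map (Complex.ofReal ·) := by
      ext i j
      by_cases h : i = j <;>
        simp [Matrix.map_apply, Matrix.one_apply, h, Complex.ofReal_sub]
    rw [hmap]
    rw [show ((lam • (1 : Matrix (Fin n) (Fin n) ℝ) - M).map fun x => (x:ℂ))
        = Complex.ofRealHom.mapMatrix (lam • (1 : Matrix (Fin n) (Fin n) ℝ) - M) from rfl,
      ← RingHom.map_det]
    simp [hdetR]
  -- every eigenvalue has modulus at most lam
  have hbound : ∀ μ ∈ spectrum ℂ (M.map (Complex.ofReal ·)), ‖μ‖ ≤ lam := by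
    intro μ hμ
    rw [mem_spectrum_iff_det] at hμ
    obtain ⟨v, hv0, hv⟩ := (Matrix.exists_mulVec_eq_zero_iff).mpr hμ
    have hv' : ∀ j, μ * v j = ∑ k, (M j k : ℂ) * v k := by
      intro j
      have h := congrFun hv j
      simp only [Matrix.sub_mulVec, Matrix.smul_mulVec, Matrix.one_mulVec,
        Pi.sub_apply, Pi.smul_apply, smul_eq_mul, Pi.zero_apply, sub_eq_zero] at h
      simpa [Matrix.mulVec, dotProduct, Matrix.map_apply] using h
    set w : Fin n → ℝ := fun j => ‖v j‖ with hw
    have hwnn : ∀ j, 0 ≤ w j := fun j => norm_nonneg _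
    have hineq : ∀ j, ‖μ‖ * w j ≤ ∑ k, M j k * w k := by
      intro j
      calc ‖μ‖ * w j = ‖μ * v j‖ := by simp [hw, norm_mul]
        _ = ‖∑ k, (M j k : ℂ) * v k‖ := by rw [hv' j]
        _ ≤ ∑ k, ‖(M j k : ℂ) * v k‖ := norm_sum_le _ _
        _ = ∑ k, M j k * w k := by
            refine Finset.sum_congr rfl fun k _ => ?_
            simp [hw, norm_mul, Complex.norm_real, Real.norm_eq_abs, abs_of_nonneg (hM j k)]
    -- pair with p
    have key : ‖μ‖ * (∑ j, p j * w j) ≤ lam * (∑ j, p j * w j) := by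
      have h1 : ∑ j, p j * (‖μ‖ * w j) ≤ ∑ j, p j * (∑ k, M j k * w k) := by
        refine Finset.sum_le_sum fun j _ => ?_
        exact mul_le_mul_of_nonneg_left (hineq j) (hp j).le
      have h2 : ∑ j, p j * (∑ k, M j k * w k) = ∑ k, (p ᵥ* M) k * w k := by
        simp_rw [Finset.mul_sum]
        rw [Finset.sum_comm]
        refine Finset.sum_congr rfl fun k _ => ?_
        simp [Matrix.vecMul, dotProduct, Finset.sum_mul, mul_assoc]
      calc ‖μ‖ * (∑ j, p j * w j) = ∑ j, p j * (‖μ‖ * w j) := by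
            rw [Finset.mul_sum]; exact Finset.sum_congr rfl fun j _ => by ring
        _ ≤ ∑ k, (p ᵥ* M) k * w k := h1.trans_eq h2
        _ = lam * (∑ j, p j * w j) := by
            rw [hpe, Finset.mul_sum]
            exact Finset.sum_congr rfl fun j _ => by simp [smul_eq_mul]; ring
    have hSpos : 0 < ∑ j, p j * w j := by
      have hjex : ∃ j, v j ≠ 0 := by
        by_contra h
        push_neg at h
        exact hv0 (funext h)
      obtain ⟨j, hj⟩ := hjex
      refine Finset.sum_pos' (fun i _ => mul_nonneg (hp i).le (hwnn i)) ⟨j, Finset.mem_univ j, ?_⟩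
      exact mul_pos (hp j) (by simpa [hw] using (norm_pos_iff.mpr hj))
    exact le_of_mul_le_mul_right key hSpos
  -- conclude specRad M = lam
  have hmem_img : lam ∈ (fun z : ℂ => ‖z‖) '' spectrum ℂ (M.map (Complex.ofReal ·)) :=
    ⟨(lam : ℂ), hlam_mem, by simp [Complex.norm_real, Real.norm_eq_abs, abs_of_pos hlam_pos]⟩
  have hbdd : BddAbove ((fun z : ℂ => ‖z‖) '' spectrum ℂ (M.map (Complex.ofReal ·))) := by
    refine ⟨lam, ?_⟩
    rintro x ⟨μ, hμ, rfl⟩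
    exact hbound μ hμ
  have hspec : specRad M = lam := by
    apply le_antisymm
    · exact csSup_le ⟨lam, hmem_img⟩ (by rintro x ⟨μ, hμ, rfl⟩; exact hbound μ hμ)
    · exact le_csSup hbdd hmem_img
  have hpos : 0 < specRad M := hspec ▸ hlam_pos
  refine ⟨hpos, ?_, ?_⟩
  · rw [hspec, hlam]
    field_simp
    ring
  · intro x hx y hy hxy
    simp only
    have hx0 : (0:ℝ) < x := hx
    have hy0 : (0:ℝ) < y := hy
    have : 1 / y < 1 / x := one_div_lt_one_div_of_lt hx0 hxy
    linarith
end

section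
/- (Perturbation derivative of the Perron root.) Let n ≥ 1 and let M be an n×n real matrix with nonnegative entries that is irreducible, with spectral radius λ = ρ(M). Let u be a column vector with all entries strictly positive satisfying M·u = λ·u, let v be a column vector with all entries strictly positive satisfying vᵀ·M = λ·vᵀ, normalized so that vᵀ·u = 1. Then for any n×n real matrix E there exist ε₀ > 0 and a function μ : (-ε₀, ε₀) → ℝ such that μ(0) = λ, for every ε ∈ (-ε₀, ε₀) the number μ(ε) is a real eigenvalue of M + ε·E, and μ is differentiable at 0 with derivative μ'(0) = vᵀ·E·u. -/
open Matrix

namespace Stmt8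


lemma pow_entry_nonneg {n : ℕ} {M : Matrix (Fin n) (Fin n) ℝ}
    (hM : ∀ i j, 0 ≤ M i j) (k : ℕ) : ∀ i j, 0 ≤ (M ^ k) i j := by
  induction k with
  | zero => intro i j; by_cases h : i = j <;> simp [Matrix.one_apply, h]
  | succ k ih =>
    intro i j
    rw [pow_succ, Matrix.mul_apply]
    exact Finset.sum_nonneg fun l _ => mul_nonneg (ih i l) (hM l j)

lemma pow_mulVec_eig {n : ℕ} {M : Matrix (Fin n) (Fin n) ℝ} {w : Fin n → ℝ} {θ : ℝ}
    (h : M *ᵥ w = θ • w) (k : ℕ) : (M ^ k) *ᵥ w = θ ^ k • w := by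
  induction k with
  | zero => simp
  | succ k ih =>
    rw [pow_succ, ← Matrix.mulVec_mulVec, h, Matrix.mulVec_smul, ih, smul_smul, pow_succ]
    ring_nf

lemma eig_unique {n : ℕ} (hn : 1 ≤ n) {M : Matrix (Fin n) (Fin n) ℝ}
    (hM : ∀ i j, 0 ≤ M i j) (hirr : MatIrreducible M)
    {u : Fin n → ℝ} (hu : ∀ i, 0 < u i) {θ : ℝ} (hMu : M *ᵥ u = θ • u)
    {w : Fin n → ℝ} (hw : M *ᵥ w = θ • w) : ∃ c : ℝ, w = c • u := by
  have hne : (Finset.univ : Finset (Fin n)).Nonempty := ⟨⟨0, hn⟩, Finset.mem_univ _⟩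
  obtain ⟨j, -, hj⟩ := Finset.exists_min_image Finset.univ (fun i => w i / u i) hne
  set c := w j / u j with hc
  refine ⟨c, ?_⟩
  set z : Fin n → ℝ := w - c • u with hz
  have hznn : ∀ i, 0 ≤ z i := by
    intro i
    have h1 : c ≤ w i / u i := hj i (Finset.mem_univ i)
    have h2 : c * u i ≤ w i := (le_div_iff₀ (hu i)).mp h1
    simp [hz]
    linarith
  have hzj : z j = 0 := by
    have hcu : c * u j = w j := div_mul_cancel₀ (w j) (hu j).ne'
    simp [hz]
    linarith
  have hMz : M *ᵥ z = θ • z := by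
    rw [hz, Matrix.mulVec_sub, Matrix.mulVec_smul, hMu, hw, smul_sub, smul_comm]
  by_contra hne'
  have hz0 : z ≠ 0 := by
    intro h0
    apply hne'
    have := sub_eq_zero.mp (hz ▸ h0)
    exact this
  obtain ⟨i, hi⟩ := Function.ne_iff.mp hz0
  have hipos : 0 < z i := lt_of_le_of_ne (hznn i) (Ne.symm hi)
  obtain ⟨k, -, hk⟩ := hirr j i
  have h1 : (M ^ k *ᵥ z) j = θ ^ k * z j := by rw [pow_mulVec_eig hMz]; simp
  have h2 : (M ^ k) j i * z i ≤ (M ^ k *ᵥ z) j := by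
    rw [Matrix.mulVec, dotProduct]
    exact Finset.single_le_sum (f := fun l => (M ^ k) j l * z l)
      (fun l _ => mul_nonneg (pow_entry_nonneg hM k j l) (hznn l)) (Finset.mem_univ i)
  rw [h1, hzj, mul_zero] at h2
  nlinarith

lemma mem_spectrum_of_eig {n : ℕ} (A : Matrix (Fin n) (Fin n) ℝ) {θ : ℝ} {w : Fin n → ℝ}
    (hw : w ≠ 0) (h : A *ᵥ w = θ • w) : θ ∈ spectrum ℝ A := by
  rw [spectrum.mem_iff]
  intro hunit
  have h0 : (algebraMap ℝ (Matrix (Fin n) (Fin n) ℝ) θ - A) *ᵥ w = 0 := by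
    rw [Matrix.sub_mulVec, Algebra.algebraMap_eq_smul_one, Matrix.smul_mulVec,
      Matrix.one_mulVec, h, sub_self]
  have hiu := hunit.unit.inv_mul
  rw [IsUnit.unit_spec] at hiu
  have hcalc : ((↑hunit.unit⁻¹ : Matrix (Fin n) (Fin n) ℝ) * (algebraMap ℝ (Matrix (Fin n) (Fin n) ℝ) θ - A)) *ᵥ w = w := by
    rw [hiu, Matrix.one_mulVec]
  rw [← Matrix.mulVec_mulVec, h0, Matrix.mulVec_zero] at hcalc
  exact hw hcalc.symm



variable {n : ℕ}

/-- The nonlinear map whose zero set encodes the eigenvalue branch. -/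
noncomputable def Fmap (M E : Matrix (Fin n) (Fin n) ℝ) (v : Fin n → ℝ) :
    ℝ × ℝ × (Fin n → ℝ) → ℝ × ℝ × (Fin n → ℝ) :=
  fun p => (p.1, v ⬝ᵥ p.2.2 - 1, M *ᵥ p.2.2 + p.1 • (E *ᵥ p.2.2) - p.2.1 • p.2.2)

/-- dot product with `v` as a linear map. -/
noncomputable def dotLin (v : Fin n → ℝ) : (Fin n → ℝ) →ₗ[ℝ] ℝ where
  toFun := fun w => v ⬝ᵥ w
  map_add' := fun a b => dotProduct_add v a b
  map_smul' := fun c a => dotProduct_smul c v a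

noncomputable def wlin : (ℝ × ℝ × (Fin n → ℝ)) →ₗ[ℝ] (Fin n → ℝ) :=
  (LinearMap.snd ℝ ℝ (Fin n → ℝ)).comp (LinearMap.snd ℝ ℝ (ℝ × (Fin n → ℝ)))

noncomputable def llin : (ℝ × ℝ × (Fin n → ℝ)) →ₗ[ℝ] ℝ :=
  (LinearMap.fst ℝ ℝ (Fin n → ℝ)).comp (LinearMap.snd ℝ ℝ (ℝ × (Fin n → ℝ)))

noncomputable def elin : (ℝ × ℝ × (Fin n → ℝ)) →ₗ[ℝ] ℝ :=
  LinearMap.fst ℝ ℝ (ℝ × (Fin n → ℝ))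

/-- Its derivative at `(0, lam, u)` as a linear map. -/
noncomputable def Tmap (M E : Matrix (Fin n) (Fin n) ℝ) (u v : Fin n → ℝ) (lam : ℝ) :
    (ℝ × ℝ × (Fin n → ℝ)) →ₗ[ℝ] ℝ × ℝ × (Fin n → ℝ) :=
  elin.prod (((dotLin v).comp wlin).prod
    ((M.mulVecLin.comp wlin) + elin.smulRight (E *ᵥ u) - llin.smulRight u - lam • wlin))

@[simp] lemma Tmap_apply (M E : Matrix (Fin n) (Fin n) ℝ) (u v : Fin n → ℝ) (lam : ℝ)
    (p : ℝ × ℝ × (Fin n → ℝ)) :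
    Tmap M E u v lam p =
      (p.1, v ⬝ᵥ p.2.2, M *ᵥ p.2.2 + p.1 • (E *ᵥ u) - p.2.1 • u - lam • p.2.2) := by
  simp [Tmap, wlin, llin, elin, dotLin, sub_smul]

noncomputable def dotCLM (v : Fin n → ℝ) : (Fin n → ℝ) →L[ℝ] ℝ :=
  LinearMap.toContinuousLinearMap
  (dotLin v)

noncomputable def mvCLM (A : Matrix (Fin n) (Fin n) ℝ) : (Fin n → ℝ) →L[ℝ] (Fin n → ℝ) :=
  LinearMap.toContinuousLinearMap A.mulVecLin

noncomputable def wproj : (ℝ × ℝ × (Fin n → ℝ)) →L[ℝ] (Fin n → ℝ) :=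
  (ContinuousLinearMap.snd ℝ ℝ (Fin n → ℝ)).comp (ContinuousLinearMap.snd ℝ ℝ (ℝ × (Fin n → ℝ)))

noncomputable def lproj : (ℝ × ℝ × (Fin n → ℝ)) →L[ℝ] ℝ :=
  (ContinuousLinearMap.fst ℝ ℝ (Fin n → ℝ)).comp (ContinuousLinearMap.snd ℝ ℝ (ℝ × (Fin n → ℝ)))

noncomputable def eproj : (ℝ × ℝ × (Fin n → ℝ)) →L[ℝ] ℝ :=
  ContinuousLinearMap.fst ℝ ℝ (ℝ × (Fin n → ℝ))

theorem hasStrictFDerivAt_Fmap (M E : Matrix (Fin n) (Fin n) ℝ) (u v : Fin n → ℝ) (lam : ℝ) :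
    HasStrictFDerivAt (Fmap M E v)
      (LinearMap.toContinuousLinearMap (Tmap M E u v lam)) ((0 : ℝ), lam, u) := by
  set x₀ : ℝ × ℝ × (Fin n → ℝ) := (0, lam, u) with hx₀
  have h1 : HasStrictFDerivAt (fun p : ℝ × ℝ × (Fin n → ℝ) => p.1) eproj x₀ :=
    eproj.hasStrictFDerivAt
  have h2 : HasStrictFDerivAt (fun p : ℝ × ℝ × (Fin n → ℝ) => v ⬝ᵥ p.2.2 - 1)
      ((dotCLM v).comp wproj) x₀ :=
    (((dotCLM v).comp wproj).hasStrictFDerivAt).sub_const 1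
  have ha : HasStrictFDerivAt (fun p : ℝ × ℝ × (Fin n → ℝ) => M *ᵥ p.2.2)
      ((mvCLM M).comp wproj) x₀ := ((mvCLM M).comp wproj).hasStrictFDerivAt
  have hb := (eproj.hasStrictFDerivAt (x := x₀)).smul
    (((mvCLM E).comp wproj).hasStrictFDerivAt (x := x₀))
  have hc := ((lproj.hasStrictFDerivAt (x := x₀)).smul
    (wproj.hasStrictFDerivAt (x := x₀)))
  have h3 := (ha.add hb).sub hc
  have h := h1.prodMk (h2.prodMk h3)
  have h' : HasStrictFDerivAt (Fmap M E v)
      (eproj.prod (((dotCLM v).comp wproj).prod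
        ((mvCLM M).comp wproj +
          (eproj x₀ • (mvCLM E).comp wproj + eproj.smulRight (((mvCLM E).comp wproj) x₀)) -
          (lproj x₀ • wproj + lproj.smulRight (wproj x₀))))) x₀ := h
  refine h'.congr_fderiv ?_
  refine ContinuousLinearMap.ext fun p => ?_
  refine Prod.ext rfl (Prod.ext rfl ?_)
  show _ = (LinearMap.toContinuousLinearMap (Tmap M E u v lam) p).2.2
  simp [dotCLM, mvCLM, wproj, lproj, eproj, x₀]
  module


end Stmt8

/-- perturbation derivative of the Perron root: with Perron
vectors `u`, `v` normalized by `v ⬝ᵥ u = 1`, for any perturbation direction `E`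
there is a locally defined real eigenvalue branch `μ(ε)` of `M + ε • E` through
`λ = specRad M` which is differentiable at `0` with `μ'(0) = vᵀ E u`. -/
theorem stmt_8 {n : ℕ} (hn : 1 ≤ n) (M : Matrix (Fin n) (Fin n) ℝ)
    (hM : ∀ i j, 0 ≤ M i j) (hirr : MatIrreducible M)
    (u v : Fin n → ℝ) (hu : ∀ i, 0 < u i) (hv : ∀ i, 0 < v i)
    (hMu : M *ᵥ u = specRad M • u) (hvM : v ᵥ* M = specRad M • v)
    (hnorm : v ⬝ᵥ u = 1) (E : Matrix (Fin n) (Fin n) ℝ) :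
    ∃ ε₀ : ℝ, 0 < ε₀ ∧ ∃ μ : ℝ → ℝ,
      μ 0 = specRad M ∧
      (∀ ε ∈ Set.Ioo (-ε₀) ε₀, μ ε ∈ spectrum ℝ (M + ε • E)) ∧
      HasDerivAt μ (v ⬝ᵥ (E *ᵥ u)) 0 := by
  classical
  set lam := specRad M with hlam
  set x₀ : ℝ × ℝ × (Fin n → ℝ) := (0, lam, u) with hx₀
  -- injectivity of the derivative
  have hTinj : Function.Injective (Stmt8.Tmap M E u v lam) := by
    refine (injective_iff_map_eq_zero _).mpr ?_
    rintro ⟨a, b, w⟩ hp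
    rw [Stmt8.Tmap_apply] at hp
    rw [Prod.ext_iff, Prod.ext_iff] at hp
    obtain ⟨h1, h2, h3⟩ := hp
    simp only [Prod.fst_zero, Prod.snd_zero] at h1 h2 h3
    subst h1
    rw [zero_smul, add_zero] at h3
    have hdot := congrArg (fun y => v ⬝ᵥ y) h3
    simp only [dotProduct_sub, Matrix.dotProduct_mulVec, hvM, smul_dotProduct,
      dotProduct_smul, dotProduct_zero, hnorm, smul_eq_mul, mul_one] at hdot
    have hb : b = 0 := by linarith
    subst hb
    rw [zero_smul, sub_zero, sub_eq_zero] at h3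
    obtain ⟨c, hc⟩ := Stmt8.eig_unique hn hM hirr hu hMu h3
    subst hc
    rw [dotProduct_smul, hnorm, smul_eq_mul, mul_one] at h2
    subst h2
    simp [Prod.ext_iff]
  have hTbij : Function.Bijective (Stmt8.Tmap M E u v lam) :=
    ⟨hTinj, LinearMap.injective_iff_surjective.mp hTinj⟩
  let eT : (ℝ × ℝ × (Fin n → ℝ)) ≃ₗ[ℝ] ℝ × ℝ × (Fin n → ℝ) :=
    LinearEquiv.ofBijective _ hTbij
  let cT : (ℝ × ℝ × (Fin n → ℝ)) ≃L[ℝ] ℝ × ℝ × (Fin n → ℝ) := eT.toContinuousLinearEquiv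
  have hcoe : (cT : (ℝ × ℝ × (Fin n → ℝ)) →L[ℝ] ℝ × ℝ × (Fin n → ℝ))
      = LinearMap.toContinuousLinearMap (Stmt8.Tmap M E u v lam) := by
    refine ContinuousLinearMap.ext fun p => ?_
    rfl
  have hF : HasStrictFDerivAt (Stmt8.Fmap M E v)
      (cT : (ℝ × ℝ × (Fin n → ℝ)) →L[ℝ] ℝ × ℝ × (Fin n → ℝ)) x₀ := by
    rw [hcoe]; exact Stmt8.hasStrictFDerivAt_Fmap M E u v lam
  have hFx₀ : Stmt8.Fmap M E v x₀ = 0 := by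
    simp [Stmt8.Fmap, hx₀, hMu, hnorm, Prod.ext_iff]
  set G := hF.localInverse (Stmt8.Fmap M E v) cT x₀ with hG
  have hri := hF.eventually_right_inverse
  rw [hFx₀] at hri
  have hcont : Filter.Tendsto (fun ε : ℝ => ((ε, 0, 0) : ℝ × ℝ × (Fin n → ℝ)))
      (nhds 0) (nhds 0) := by
    have h0 : ((0 : ℝ), ((0 : ℝ), (0 : Fin n → ℝ))) = (0 : ℝ × ℝ × (Fin n → ℝ)) := rfl
    exact h0 ▸ (continuous_id.prodMk continuous_const).tendsto 0
  have hev : ∀ᶠ ε : ℝ in nhds 0, Stmt8.Fmap M E v (G (ε, 0, 0)) = (ε, 0, 0) :=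
    hcont.eventually hri
  obtain ⟨ε₀, hε₀pos, hball⟩ := Metric.eventually_nhds_iff_ball.mp hev
  refine ⟨ε₀, hε₀pos, fun ε => (G (ε, 0, 0)).2.1, ?_, ?_, ?_⟩
  · -- μ 0 = lam
    have h0 : ((0 : ℝ), ((0 : ℝ), (0 : Fin n → ℝ))) = Stmt8.Fmap M E v x₀ := hFx₀.symm
    show (G ((0 : ℝ), (0 : ℝ), (0 : Fin n → ℝ))).2.1 = lam
    rw [h0, hG, hF.localInverse_apply_image]
  · -- eigenvalue branch
    intro ε hε
    have hmem : ε ∈ Metric.ball (0 : ℝ) ε₀ := by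
      rw [Metric.mem_ball, Real.dist_eq, sub_zero]
      exact abs_lt.mpr ⟨hε.1, hε.2⟩
    have heq := hball ε hmem
    set p := G (ε, 0, 0) with hp
    rw [Stmt8.Fmap, Prod.ext_iff, Prod.ext_iff] at heq
    obtain ⟨h1, h2, h3⟩ := heq
    simp only at h1 h2 h3
    have hw1 : v ⬝ᵥ p.2.2 = 1 := by linarith [h2]
    have hwne : p.2.2 ≠ 0 := by
      intro h0
      rw [h0, dotProduct_zero] at hw1
      norm_num at hw1
    have heig : (M + ε • E) *ᵥ p.2.2 = p.2.1 • p.2.2 := by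
      rw [Matrix.add_mulVec, Matrix.smul_mulVec, ← h1]
      exact sub_eq_zero.mp h3
    exact Stmt8.mem_spectrum_of_eig _ hwne heig
  · -- derivative
    have hGder := hF.to_localInverse
    rw [hFx₀] at hGder
    set ι : ℝ →L[ℝ] ℝ × ℝ × (Fin n → ℝ) := (ContinuousLinearMap.id ℝ ℝ).prod 0 with hι
    have hcomp1 : HasStrictFDerivAt (fun ε : ℝ => G (ε, 0, 0))
        (((cT.symm : (ℝ × ℝ × (Fin n → ℝ)) →L[ℝ] ℝ × ℝ × (Fin n → ℝ))).comp ι) 0 := by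
      have h := hGder.comp (0 : ℝ) ι.hasStrictFDerivAt
      exact h
    have hcomp2 : HasStrictFDerivAt (fun ε : ℝ => (G (ε, 0, 0)).2.1)
        (Stmt8.lproj.comp
          (((cT.symm : (ℝ × ℝ × (Fin n → ℝ)) →L[ℝ] ℝ × ℝ × (Fin n → ℝ))).comp ι)) 0 :=
      (Stmt8.lproj.hasStrictFDerivAt).comp 0 hcomp1
    have hDeriv := hcomp2.hasFDerivAt.hasDerivAt
    have hval : (Stmt8.lproj.comp
        (((cT.symm : (ℝ × ℝ × (Fin n → ℝ)) →L[ℝ] ℝ × ℝ × (Fin n → ℝ))).comp ι)) 1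
        = v ⬝ᵥ (E *ᵥ u) := by
      set q := cT.symm ((1 : ℝ), (0 : ℝ), (0 : Fin n → ℝ)) with hq
      have happ : Stmt8.Tmap M E u v lam q = ((1 : ℝ), (0 : ℝ), (0 : Fin n → ℝ)) := by
        have := cT.apply_symm_apply ((1 : ℝ), (0 : ℝ), (0 : Fin n → ℝ))
        exact this
      rw [Stmt8.Tmap_apply, Prod.ext_iff, Prod.ext_iff] at happ
      obtain ⟨h1, h2, h3⟩ := happ
      simp only at h1 h2 h3
      have hdot := congrArg (fun y => v ⬝ᵥ y) h3
      simp only [dotProduct_sub, dotProduct_add, Matrix.dotProduct_mulVec, hvM,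
        smul_dotProduct, dotProduct_smul, dotProduct_zero, hnorm, smul_eq_mul, mul_one,
        h1, h2, one_smul, mul_zero] at hdot
      show q.2.1 = v ⬝ᵥ (E *ᵥ u)
      have hEd : v ᵥ* E ⬝ᵥ u = v ⬝ᵥ (E *ᵥ u) := (Matrix.dotProduct_mulVec v E u).symm
      linarith
    exact hval ▸ hDeriv
end
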